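/- arXiv:1504.06647 — 9 statements merged into one kernel-verified Lean document; each statement's English description precedes it below -/
import Mathlib

section
/- If x is a prefix of a word w, y is a suffix of w, |x| + |y| ≥ |w| + p, and p is a period of both x and y, then p is a period of w. -/
variable {α : Type*}

/-- The subword of `w` of length `len` starting at 0-indexed position `i`. -/
def subword (w : List α) (i len : ℕ) : List α := (w.drop i).take len

/-- `u` occurs in `w` at 0-indexed position `i`. -/
def OccursAt (u w : List α) (i : ℕ) : Prop :=
  i + u.length ≤ w.length ∧ subword w i u.length = u

/-- `p` is a period of `w`: `w[i] = w[i+p]` whenever both positions are in range. -/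
def HasPeriod (w : List α) (p : ℕ) : Prop :=
  0 < p ∧ ∀ i : ℕ, i + p < w.length → w[i]? = w[i + p]?

/-- `per w`: the length of the shortest period of `w`. -/
noncomputable def minPeriod (w : List α) : ℕ := sInf {p | HasPeriod w p}

lemma prefix_get? {x w : List α} (hx : x <+: w) {i : ℕ} (hi : i < x.length) :
    w[i]? = x[i]? := by
  obtain ⟨t, rfl⟩ := hx
  rw [List.getElem?_append_left hi]

lemma suffix_get? {y w : List α} (hy : y <:+ w) (j : ℕ) :
    w[w.length - y.length + j]? = y[j]? := by
  obtain ⟨s, rfl⟩ := hy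
  have : (s ++ y).length - y.length = s.length := by simp
  rw [this, List.getElem?_append_right (by omega)]
  congr 1
  omega

/-- If `x` is a prefix of `w`, `y` is a suffix of `w`, `|x| + |y| ≥ |w| + p`,
and `p` is a period of both `x` and `y`, then `p` is a period of `w`. -/
theorem statement_0 (w x y : List α) (p : ℕ)
    (hx : x <+: w) (hy : y <:+ w)
    (hlen : w.length + p ≤ x.length + y.length)
    (hpx : HasPeriod x p) (hpy : HasPeriod y p) :
    HasPeriod w p := by
  obtain ⟨hp, hpx⟩ := hpx
  obtain ⟨_, hpy⟩ := hpy
  have hxl := hx.length_le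
  have hyl := hy.length_le
  refine ⟨hp, fun i hi => ?_⟩
  by_cases h : i + p < x.length
  · rw [prefix_get? hx (by omega), prefix_get? hx h, hpx i h]
  · -- use y : positions i and i+p are ≥ w.length - y.length
    have hstart : w.length - y.length ≤ i := by omega
    have e1 := suffix_get? hy (i - (w.length - y.length))
    have e2 := suffix_get? hy (i - (w.length - y.length) + p)
    rw [show w.length - y.length + (i - (w.length - y.length)) = i by omega] at e1
    rw [show w.length - y.length + (i - (w.length - y.length) + p) = i + p by omega] at e2
    rw [e1, e2]
    exact hpy _ (by omega)
end

section
/- (Fine–Wilf periodicity lemma) If p and q are both periods of a word w and p + q ≤ |w|, then gcd(p, q) is also a period of w. -/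
variable {α : Type*}

lemma sub_period (w : List α) (p q : ℕ) (hp : HasPeriod w p) (hq : HasPeriod w q)
    (hlt : q < p) (hpq : p + q ≤ w.length) : HasPeriod w (p - q) := by
  obtain ⟨hp0, hp'⟩ := hp
  obtain ⟨hq0, hq'⟩ := hq
  refine ⟨by omega, fun i hi => ?_⟩
  by_cases h : i + p < w.length
  · have h1 := hp' i h
    have h2 := hq' (i + (p - q)) (by omega)
    rw [h1, h2]
    congr 1
    omega
  · have h1 := hq' (i - q) (by omega)
    have h2 := hp' (i - q) (by omega)
    have e1 : i - q + q = i := by omega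
    have e2 : i - q + p = i + (p - q) := by omega
    rw [e1] at h1
    rw [e2] at h2
    rw [← h1, ← h2]

lemma fw_aux (w : List α) : ∀ k p q, p + q ≤ k → HasPeriod w p → HasPeriod w q →
    p + q ≤ w.length → HasPeriod w (Nat.gcd p q) := by
  intro k
  induction k with
  | zero => intro p q hk hp _ _; exact absurd hp.1 (by omega)
  | succ k ih =>
    intro p q hk hp hq hn
    rcases lt_trichotomy p q with h | h | h
    · have hsub := sub_period w q p hq hp h (by omega)
      have hg : Nat.gcd p q = Nat.gcd (q - p) p := by
        rw [Nat.gcd_comm (q - p) p]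
        conv_lhs => rw [show q = (q - p) + p by omega]
        rw [Nat.gcd_add_self_right]
      rw [hg]
      exact ih (q - p) p (by have := hp.1; omega) hsub hp (by omega)
    · subst h
      rwa [Nat.gcd_self]
    · have hsub := sub_period w p q hp hq h (by omega)
      have hg : Nat.gcd p q = Nat.gcd (p - q) q := by
        conv_lhs => rw [show p = (p - q) + q by omega, Nat.gcd_comm]
        rw [Nat.gcd_add_self_right, Nat.gcd_comm]
      rw [hg]
      exact ih (p - q) q (by have := hq.1; omega) hsub hq (by omega)

/-- Fine–Wilf periodicity lemma: if `p` and `q` are periods of `w` and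
`p + q ≤ |w|`, then `gcd p q` is also a period of `w`. -/
theorem statement_1 (w : List α) (p q : ℕ)
    (hp : HasPeriod w p) (hq : HasPeriod w q) (hpq : p + q ≤ w.length) :
    HasPeriod w (Nat.gcd p q) := by
  exact fw_aux w (p+q) p q le_rfl hp hq hpq
end

section
/- Let w be a word with shortest period per(w) ≤ |w|/2, let v = w[1..⌈|w|/2⌉], and let p be the starting position of the second occurrence of v in w (i.e., the smallest position p > 1 such that v occurs at position p in w). Then per(w) = p - 1. -/
variable {α : Type*}

/-- If `per w ≤ |w|/2`, `v` is the prefix of `w` of length `⌈|w|/2⌉`, and `q` is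
the 0-indexed position of the second occurrence of `v` in `w` (the smallest
position `q ≥ 1` where `v` occurs), then `per w = q`. -/
theorem statement_2 (w : List α) (q : ℕ)
    (hw : 0 < w.length)
    (hper : 2 * minPeriod w ≤ w.length)
    (hq : 1 ≤ q)
    (hocc : OccursAt (w.take ((w.length + 1) / 2)) w q)
    (hmin : ∀ q', 1 ≤ q' → q' < q → ¬ OccursAt (w.take ((w.length + 1) / 2)) w q') :
    minPeriod w = q := by
  set n := w.length with hn
  set m := (n + 1) / 2 with hm
  have hne : {p | HasPeriod w p}.Nonempty :=
    ⟨n, hw, fun i hi => absurd hi (by omega)⟩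
  have hp : HasPeriod w (minPeriod w) := Nat.sInf_mem hne
  obtain ⟨hppos, hperiod⟩ := hp
  set p := minPeriod w with hpdef
  have hpm : p + m ≤ n := by omega
  have hlen : (w.take m).length = m := by
    simp [hm]; omega
  -- occurrence of the half-prefix at position p
  have hoccp : OccursAt (w.take m) w p := by
    refine ⟨by omega, ?_⟩
    apply List.ext_getElem?
    intro i
    rw [hlen, subword]
    by_cases h : i < m
    · rw [List.getElem?_take_of_lt h, List.getElem?_take_of_lt h, List.getElem?_drop]
      have := hperiod i (by omega)
      rw [Nat.add_comm p i]
      exact this.symm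
    · rw [List.getElem?_eq_none_iff.mpr, List.getElem?_eq_none_iff.mpr]
      · simpa using by omega
      · simp; omega
  have hqp : q ≤ p := by
    by_contra h
    exact hmin p (by omega) (by omega) hoccp
  obtain ⟨hqlen, hqsub⟩ := hocc
  rw [hlen] at hqlen hqsub
  have key : ∀ i, i < m → w[i]? = w[i + q]? := by
    intro i hi
    have := congrArg (fun l : List α => l[i]?) hqsub
    simp only [subword] at this
    rw [List.getElem?_take_of_lt hi, List.getElem?_take_of_lt hi, List.getElem?_drop] at this
    rw [Nat.add_comm i q]
    exact this.symm
  have main : ∀ i, i + q < n → w[i]? = w[i + q]? := by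
    intro i
    induction i using Nat.strong_induction_on with
    | _ i ih =>
      intro hi
      by_cases h : i < m
      · exact key i h
      · have hpi : p ≤ i := by omega
        have h1 : w[i - p]? = w[i]? := by
          have := hperiod (i - p) (by omega)
          rwa [Nat.sub_add_cancel hpi] at this
        have h2 : w[i - p + q]? = w[i + q]? := by
          have := hperiod (i - p + q) (by omega)
          rwa [show i - p + q + p = i + q by omega] at this
        have h3 := ih (i - p) (by omega) (by omega)
        rw [← h1, h3, h2]
  have hqper : HasPeriod w q := ⟨hq, main⟩
  have : p ≤ q := Nat.sInf_le hqper
  omega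
end

section
/- Let y be a prefix of a word x with |y| ≥ 2·per(x). If x has a non-shiftable occurrence at position i in a word w, then the occurrence of y at position i in w is also non-shiftable. -/
variable {α : Type*}

lemma hasPeriod_nonempty (w : List α) : {p | HasPeriod w p}.Nonempty :=
  ⟨w.length + 1, ⟨Nat.succ_pos _, fun i hi => absurd hi (by omega)⟩⟩

lemma minPeriod_hasPeriod (w : List α) : HasPeriod w (minPeriod w) :=
  Nat.sInf_mem (hasPeriod_nonempty w)

lemma occursAt_get? {u w : List α} {i : ℕ} (h : OccursAt u w i) {j : ℕ}
    (hj : j < u.length) : w[i + j]? = u[j]? := by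
  have h2 := h.2
  unfold subword at h2
  rw [← h2, List.getElem?_take_of_lt hj, List.getElem?_drop]

lemma occursAt_of_get? {u w : List α} {i : ℕ} (hlen : i + u.length ≤ w.length)
    (h : ∀ j < u.length, w[i + j]? = u[j]?) : OccursAt u w i := by
  refine ⟨hlen, ?_⟩
  apply List.ext_getElem?
  intro n
  by_cases hn : n < u.length
  · show ((w.drop i).take u.length)[n]? = _
    rw [List.getElem?_take_of_lt hn, List.getElem?_drop, h n hn]
  · have hl : (subword w i u.length).length ≤ n := by
      simp [subword]; omega
    rw [List.getElem?_eq_none_iff.mpr hl, List.getElem?_eq_none_iff.mpr (by omega)]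

lemma period_add_mul {x : List α} {p : ℕ} (hp : HasPeriod x p) :
    ∀ (k a : ℕ), a + k * p < x.length → x[a]? = x[a + k * p]? := by
  intro k
  induction k with
  | zero => simp
  | succ k ih =>
    intro a ha
    have heq : a + (k + 1) * p = a + k * p + p := by ring
    rw [heq] at ha ⊢
    rw [ih a (by omega)]
    exact hp.2 _ ha

lemma period_congr {x : List α} {p : ℕ} (hp : HasPeriod x p) {a b : ℕ}
    (hab : a ≤ b) (hdvd : p ∣ b - a) (hb : b < x.length) :
    x[a]? = x[b]? := by
  obtain ⟨k, hk⟩ := hdvd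
  have : b = a + k * p := by rw [Nat.mul_comm]; omega
  subst this
  exact period_add_mul hp k a hb

lemma prefix_get?_s3 {y x : List α} (hpre : y <+: x) {j : ℕ} (hj : j < y.length) :
    x[j]? = y[j]? := by
  obtain ⟨t, rfl⟩ := hpre
  rw [List.getElem?_append_left hj]

/-- An occurrence of `x` at (0-indexed) position `i` in `w` is shiftable if
`x` also occurs at position `i - per x`. -/
def Shiftable (x w : List α) (i : ℕ) : Prop :=
  minPeriod x ≤ i ∧ OccursAt x w (i - minPeriod x)

/-- Let `y` be a prefix of `x` with `|y| ≥ 2 · per x`. If `x` has a non-shiftable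
occurrence at position `i` in `w`, then the occurrence of `y` at position `i`
is also non-shiftable. -/
theorem statement_3 (x y w : List α) (i : ℕ)
    (hpre : y <+: x) (hlen : 2 * minPeriod x ≤ y.length)
    (hocc : OccursAt x w i) (hns : ¬ Shiftable x w i) :
    OccursAt y w i ∧ ¬ Shiftable y w i := by
  set p := minPeriod x with hpdef
  have hp : HasPeriod x p := minPeriod_hasPeriod x
  have hp0 : 0 < p := hp.1
  have hylen : y.length ≤ x.length := hpre.length_le
  have hoccy : OccursAt y w i := by
    refine occursAt_of_get? (by have := hocc.1; omega) (fun j hj => ?_)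
    rw [occursAt_get? hocc (lt_of_lt_of_le hj hylen), prefix_get?_s3 hpre hj]
  refine ⟨hoccy, ?_⟩
  rintro ⟨hqi, hyocc'⟩
  apply hns
  set q := minPeriod y with hqdef
  have hq : HasPeriod y q := minPeriod_hasPeriod y
  have hpy : HasPeriod y p := by
    refine ⟨hp0, fun j hj => ?_⟩
    rw [← prefix_get?_s3 hpre (by omega), ← prefix_get?_s3 hpre hj]
    exact hp.2 j (by omega)
  have hqp : q ≤ p := Nat.sInf_le hpy
  have hqx : HasPeriod x q := by
    refine ⟨hq.1, fun j hj => ?_⟩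
    set r := j % p with hr
    have hrlt : r < p := Nat.mod_lt _ hp0
    have hdm := Nat.div_add_mod j p
    have h1 : x[r]? = x[j]? :=
      period_congr hp (Nat.mod_le _ _) ⟨j / p, by omega⟩ (by omega)
    have h2 : x[r + q]? = x[j + q]? :=
      period_congr hp (by omega) ⟨j / p, by omega⟩ hj
    have hry : r < y.length := by omega
    have hrqy : r + q < y.length := by omega
    rw [← h1, ← h2, prefix_get?_s3 hpre hry, prefix_get?_s3 hpre hrqy]
    exact hq.2 r hrqy
  have hpq : p = q := le_antisymm (Nat.sInf_le hqx) hqp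
  refine ⟨by omega, ?_⟩
  refine occursAt_of_get? (by have := hocc.1; omega) (fun j hj => ?_)
  by_cases hjy : j < y.length
  · have h3 := occursAt_get? hyocc' hjy
    rw [show i - p + j = i - q + j from by rw [hpq], h3]
    exact (prefix_get?_s3 hpre hjy).symm
  · have hjp : p ≤ j := by omega
    rw [show i - p + j = i + (j - p) from by omega,
      occursAt_get? hocc (show j - p < x.length by omega)]
    exact period_congr hp (by omega) ⟨1, by omega⟩ hj
end

section
/- Let ℓ ≥ 3 be an integer and let w be a word of length at least ℓ that is not highly periodic (per(w) > |w|/3). Then there exists an index i with 1 ≤ i ≤ |w| - ℓ + 1 such that w[i..i+ℓ-1] is not highly periodic (per(w[i..i+ℓ-1]) > ℓ/3), and moreover either i = 1 or w[1..i+ℓ-2] is highly periodic (per(w[1..i+ℓ-2]) ≤ ℓ/3). -/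
variable {α : Type*}

lemma hasPeriod_big (u : List α) : HasPeriod u (u.length + 1) :=
  ⟨Nat.succ_pos _, fun i h => absurd h (by omega)⟩

lemma minPeriod_mem (u : List α) : HasPeriod u (minPeriod u) := by
  have hne : {p | HasPeriod u p}.Nonempty :=
    ⟨u.length + 1, Set.mem_setOf_eq ▸ hasPeriod_big u⟩
  exact Nat.sInf_mem hne

lemma minPeriod_le (u : List α) {p : ℕ} (h : HasPeriod u p) : minPeriod u ≤ p :=
  Nat.sInf_le h

lemma subword_get? (w : List α) (i len t : ℕ) (ht : t < len) :
    (subword w i len)[t]? = w[i + t]? := by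
  rw [subword, List.getElem?_take_of_lt ht, List.getElem?_drop]

lemma take_get? (w : List α) (n t : ℕ) (ht : t < n) :
    (w.take n)[t]? = w[t]? := List.getElem?_take_of_lt ht

/-- Let `ℓ ≥ 3` and let `w` be a non-highly periodic word (`per w > |w|/3`) of length
at least `ℓ`. Then there is a (0-indexed) position `i` such that the length-`ℓ`
subword `w[i..i+ℓ-1]` is not highly periodic, and either `i = 0` or the prefix
`w[0..i+ℓ-2]` is highly periodic. -/
theorem statement_7 (w : List α) (ℓ : ℕ)
    (hℓ : 3 ≤ ℓ) (hw : ℓ ≤ w.length)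
    (hnp : w.length < 3 * minPeriod w) :
    ∃ i, i + ℓ ≤ w.length ∧ ℓ < 3 * minPeriod (subword w i ℓ) ∧
      (i = 0 ∨ 3 * minPeriod (w.take (i + ℓ - 1)) ≤ ℓ) := by
  by_cases h0 : ℓ < 3 * minPeriod (subword w 0 ℓ)
  · exact ⟨0, by omega, h0, Or.inl rfl⟩
  push_neg at h0
  have hsub0 : subword w 0 ℓ = w.take ℓ := by simp [subword]
  set M : Set ℕ := {m | m ≤ w.length ∧ 3 * minPeriod (w.take m) ≤ ℓ} with hMdef
  have hℓM : ℓ ∈ M := ⟨hw, by rw [← hsub0]; exact h0⟩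
  have hbdd : BddAbove M := ⟨w.length, fun m hm => hm.1⟩
  set m := sSup M with hm
  have hmM : m ∈ M := Nat.sSup_mem ⟨ℓ, hℓM⟩ hbdd
  have hℓm : ℓ ≤ m := le_csSup hbdd hℓM
  have hmlt : m < w.length := by
    rcases lt_or_eq_of_le hmM.1 with h | h
    · exact h
    · exfalso
      have := hmM.2
      rw [h, List.take_length] at this
      omega
  set i := m + 1 - ℓ with hi
  refine ⟨i, by omega, ?_, Or.inr ?_⟩
  swap
  · have : i + ℓ - 1 = m := by omega
    rw [this]; exact hmM.2
  by_contra hcon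
  push_neg at hcon
  set p := minPeriod (subword w i ℓ) with hp
  set q := minPeriod (w.take m) with hq
  have hq3 : 3 * q ≤ ℓ := hmM.2
  have hpper := minPeriod_mem (subword w i ℓ)
  have hqper := minPeriod_mem (w.take m)
  have hp1 : 0 < p := hpper.1
  have hq1 : 0 < q := hqper.1
  have hsublen : (subword w i ℓ).length = ℓ := by
    rw [subword, List.length_take, List.length_drop]; omega
  -- window period fact
  have W : ∀ a, i ≤ a → a + p ≤ m → w[a]? = w[a + p]? := by
    intro a ha ham
    have ht : (a - i) + p < ℓ := by omega
    have := hpper.2 (a - i) (by rw [hsublen]; exact ht)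
    rw [subword_get? w i ℓ (a - i) (by omega), subword_get? w i ℓ (a - i + p) ht] at this
    rw [show i + (a - i) = a from by omega, show i + (a - i + p) = a + p from by omega] at this
    exact this
  -- prefix period fact
  have P : ∀ a, a + q < m → w[a]? = w[a + q]? := by
    intro a ha
    have hlen : (w.take m).length = m := by rw [List.length_take]; omega
    have := hqper.2 a (by rw [hlen]; exact ha)
    rwa [take_get? w m a (by omega), take_get? w m (a + q) ha] at this
  -- key: w[m - q] = w[m]
  have hpqℓ : p + q + 1 ≤ ℓ := by omega
  have key : w[m - q]? = w[m]? := by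
    have e1 : w[m - p]? = w[m]? := by
      have := W (m - p) (by omega) (by omega)
      rwa [show m - p + p = m from by omega] at this
    have e2 : w[m - p - q]? = w[m - q]? := by
      have := W (m - p - q) (by omega) (by omega)
      rwa [show m - p - q + p = m - q from by omega] at this
    have e3 : w[m - p - q]? = w[m - p]? := by
      have := P (m - p - q) (by omega)
      rwa [show m - p - q + q = m - p from by omega] at this
    rw [← e2, e3, e1]
  -- the prefix of length m+1 has period q
  have hper1 : HasPeriod (w.take (m + 1)) q := by
    refine ⟨hq1, fun k hk => ?_⟩
    have hlen : (w.take (m + 1)).length = m + 1 := by rw [List.length_take]; omega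
    rw [hlen] at hk
    rw [take_get? w (m + 1) k (by omega), take_get? w (m + 1) (k + q) (by omega)]
    rcases lt_or_eq_of_le (Nat.lt_succ_iff.mp hk) with h | h
    · exact P k h
    · rw [show k = m - q from by omega, show m - q + q = m from by omega]
      exact key
  have hmem : m + 1 ∈ M := by
    refine ⟨by omega, ?_⟩
    have := minPeriod_le (w.take (m + 1)) hper1
    omega
  have := le_csSup hbdd hmem
  omega
end

section
/- Let ℓ ≥ 3 and let w be a word with per(w[1..ℓ]) ≤ ℓ/3. Let j be the largest index such that per(w[1..j]) = per(w[1..ℓ]), and suppose j < |w|. Then per(w[j+2-ℓ..j+1]) > ℓ/3. -/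
variable {α : Type*}

lemma hasPeriod_length {w : List α} (h : 0 < w.length) : HasPeriod w w.length :=
  ⟨h, fun i hi => by omega⟩

lemma hasPeriod_minPeriod {w : List α} (h : 0 < w.length) : HasPeriod w (minPeriod w) :=
  by
  have : minPeriod w ∈ {p | HasPeriod w p} :=
    Nat.sInf_mem ⟨w.length, hasPeriod_length h⟩
  exact this

lemma hasPeriod_take {w : List α} {p : ℕ} (h : HasPeriod w p) (n : ℕ) :
    HasPeriod (w.take n) p := by
  refine ⟨h.1, fun i hi => ?_⟩
  rw [List.length_take] at hi
  rw [List.getElem?_take_of_lt (by omega), List.getElem?_take_of_lt (by omega)]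
  exact h.2 i (by omega)

lemma minPeriod_take_le {w : List α} (h : 0 < w.length) (n : ℕ) :
    minPeriod (w.take n) ≤ minPeriod w :=
  Nat.sInf_le (hasPeriod_take (hasPeriod_minPeriod h) n)

/-- Let `ℓ ≥ 3` and `per (w.take ℓ) ≤ ℓ/3`. If `j` is the largest index with
`per (w.take j) = per (w.take ℓ)` (so `j ≥ ℓ` and the equality fails for `j + 1`)
and `j < |w|`, then the length-`ℓ` subword ending at (0-indexed) position `j`,
namely `w[j+1-ℓ..j]`, is not highly periodic. -/
theorem statement_8 (w : List α) (ℓ j : ℕ)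
    (hℓ : 3 ≤ ℓ)
    (hper : 3 * minPeriod (w.take ℓ) ≤ ℓ)
    (hℓj : ℓ ≤ j) (hj : j < w.length)
    (heq : minPeriod (w.take j) = minPeriod (w.take ℓ))
    (hmax : minPeriod (w.take (j + 1)) ≠ minPeriod (w.take ℓ)) :
    ℓ < 3 * minPeriod (subword w (j + 1 - ℓ) ℓ) := by
  by_contra hcon
  push_neg at hcon
  set p := minPeriod (w.take ℓ) with hp_def
  set q := minPeriod (subword w (j + 1 - ℓ) ℓ) with hq_def
  -- the subword has length ℓ
  have hulen : (subword w (j + 1 - ℓ) ℓ).length = ℓ := by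
    simp [subword, List.length_take, List.length_drop]; omega
  have hq : HasPeriod (subword w (j + 1 - ℓ) ℓ) q :=
    hasPeriod_minPeriod (by omega)
  have hp : HasPeriod (w.take j) p := by
    rw [← heq]
    exact hasPeriod_minPeriod (by rw [List.length_take]; omega)
  have hp0 : 0 < p := hp.1
  have hq0 : 0 < q := hq.1
  -- translate the periods to statements about w.get?
  have hp' : ∀ i, i + p < j → w[i]? = w[i + p]? := by
    intro i hi
    have := hp.2 i (by rw [List.length_take]; omega)
    rwa [List.getElem?_take_of_lt (by omega), List.getElem?_take_of_lt (by omega)] at this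
  have hq' : ∀ i, j + 1 - ℓ ≤ i → i + q < j + 1 → w[i]? = w[i + q]? := by
    intro i h1 h2
    have := hq.2 (i - (j + 1 - ℓ)) (by rw [hulen]; omega)
    simp only [subword] at this
    rw [List.getElem?_take_of_lt (by omega), List.getElem?_take_of_lt (by omega),
        List.getElem?_drop, List.getElem?_drop] at this
    have e1 : j + 1 - ℓ + (i - (j + 1 - ℓ)) = i := by omega
    have e2 : j + 1 - ℓ + (i - (j + 1 - ℓ) + q) = i + q := by omega
    rwa [e1, e2] at this
  -- key: w[j - p] = w[j]
  have hkey : w[j - p]? = w[j]? := by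
    have s1 : w[j - q]? = w[j]? := by
      have := hq' (j - q) (by omega) (by omega)
      rwa [show j - q + q = j by omega] at this
    have s2 : w[j - q - p]? = w[j - q]? := by
      have := hp' (j - q - p) (by omega)
      rwa [show j - q - p + p = j - q by omega] at this
    have s3 : w[j - q - p]? = w[j - p]? := by
      have := hq' (j - q - p) (by omega) (by omega)
      rwa [show j - q - p + q = j - p by omega] at this
    rw [← s3, s2, s1]
  -- so w.take (j+1) has period p
  have hP : HasPeriod (w.take (j + 1)) p := by
    refine ⟨hp0, fun i hi => ?_⟩
    rw [List.length_take] at hi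
    rw [List.getElem?_take_of_lt (by omega), List.getElem?_take_of_lt (by omega)]
    rcases Nat.lt_or_ge (i + p) j with h | h
    · exact hp' i h
    · have : i = j - p := by omega
      subst this
      rwa [show j - p + p = j by omega]
  apply hmax
  have h1 : minPeriod (w.take (j + 1)) ≤ p := Nat.sInf_le hP
  have h2 : p ≤ minPeriod (w.take (j + 1)) := by
    rw [← heq, show w.take j = (w.take (j + 1)).take j by
      rw [List.take_take]; congr 1; omega]
    exact minPeriod_take_le (by rw [List.length_take]; omega) j
  omega
end

section
/- Let w = g₁g₂⋯g_a be a c-optimal factorization of w into a phrases, and suppose the LZ77 factorization of w consists of z phrases. Then a ≤ c·z. -/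
variable {α : Type*}

/-- The fragment of `w` of length `len` starting at 0-indexed position `i`
is a previous fragment: the corresponding word occurs earlier in `w`. -/
def PrevFrag (w : List α) (i len : ℕ) : Prop :=
  0 < len ∧ i + len ≤ w.length ∧ ∃ i' < i, OccursAt (subword w i len) w i'

/-- The letter at position `i` of `w` does not occur earlier in `w`. -/
def FreshLetter (w : List α) (i : ℕ) : Prop :=
  i < w.length ∧ ∀ i' < i, w[i']? ≠ w[i]?

/-- A phrase is a previous fragment or a single letter not occurring before. -/
def IsPhrase (w : List α) (i len : ℕ) : Prop :=
  PrevFrag w i len ∨ (len = 1 ∧ FreshLetter w i)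

/-- `b 0 = 0 < b 1 < ... < b a = |w|` are the boundaries of a factorization of `w`
into `a` pieces; piece `k` starts at `b k` and has length `b (k+1) - b k`. -/
def IsFactorization (w : List α) (a : ℕ) (b : ℕ → ℕ) : Prop :=
  b 0 = 0 ∧ b a = w.length ∧ ∀ k < a, b k < b (k + 1)

/-- A factorization of `w` into `a` phrases. -/
def IsPhraseFactorization (w : List α) (a : ℕ) (b : ℕ → ℕ) : Prop :=
  IsFactorization w a b ∧ ∀ k < a, IsPhrase w (b k) (b (k + 1) - b k)

/-- The LZ77 (greedy) factorization of `w` into `z` phrases: each phrase is the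
longest possible phrase starting at its position. -/
def IsLZ77 (w : List α) (z : ℕ) (b : ℕ → ℕ) : Prop :=
  IsPhraseFactorization w z b ∧
    ∀ k < z, ∀ len, b (k + 1) - b k < len → b k + len ≤ w.length →
      ¬ IsPhrase w (b k) len

lemma subword_length (w : List α) (i len : ℕ) (h : i + len ≤ w.length) :
    (subword w i len).length = len := by
  simp [subword]; omega

lemma subword_subword (w : List α) (i d L n : ℕ) (h : d + L ≤ n) :
    subword w (i + d) L = ((subword w i n).drop d).take L := by
  simp only [subword, List.drop_take, List.drop_drop, List.take_take]
  congr 1; omega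

lemma fact_mono {w : List α} {a : ℕ} {b : ℕ → ℕ} (h : IsFactorization w a b) :
    ∀ j k : ℕ, j < k → k ≤ a → b j < b k := by
  intro j k
  induction k with
  | zero => omega
  | succ n ih =>
    intro hjk hka
    rcases Nat.lt_or_ge j n with h1 | h1
    · exact lt_trans (ih (by omega) (by omega)) (h.2.2 n (by omega))
    · have hjn : j = n := by omega
      rw [hjn]; exact h.2.2 n (by omega)

lemma fact_mono' {w : List α} {a : ℕ} {b : ℕ → ℕ} (h : IsFactorization w a b) :
    ∀ j k : ℕ, j ≤ k → k ≤ a → b j ≤ b k := by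
  intro j k hjk hka
  rcases Nat.lt_or_ge j k with h1 | h1
  · exact le_of_lt (fact_mono h j k h1 hka)
  · have : j = k := by omega
    subst this; exact le_refl _

/-- If `w = g₁⋯g_a` is a `c`-optimal factorization into phrases (no `c` consecutive
phrases concatenate to a previous fragment) and the LZ77 factorization of `w` has
`z` phrases, then `a ≤ c · z`. -/
theorem statement_9 (w : List α) (a c z : ℕ) (g f : ℕ → ℕ)
    (hc : 0 < c)
    (hg : IsPhraseFactorization w a g)
    (hopt : ∀ i, i + c ≤ a → ¬ PrevFrag w (g i) (g (i + c) - g i))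
    (hlz : IsLZ77 w z f) :
    a ≤ c * z := by
  obtain ⟨hgf, _⟩ := hg
  obtain ⟨⟨hff, hfph⟩, _⟩ := hlz
  have gmono := fact_mono hgf
  have gmono' := fact_mono' hgf
  have fmono := fact_mono hff
  have fmono' := fact_mono' hff
  have hwa : g a = w.length := hgf.2.1
  have hwz : f z = w.length := hff.2.1
  -- assign to each g-boundary the LZ77 phrase containing it
  set φ : ℕ → ℕ := fun i => Nat.findGreatest (fun k => f k ≤ g i) z with hφdef
  have hφ : ∀ i < a, φ i < z ∧ f (φ i) ≤ g i ∧ g i < f (φ i + 1) := by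
    intro i hi
    have hgi : g i < w.length := by
      rw [← hwa]; exact gmono _ _ hi (le_refl a)
    have h0 : f 0 ≤ g i := by rw [hff.1]; exact Nat.zero_le _
    have hspec : f (φ i) ≤ g i :=
      Nat.findGreatest_spec (P := fun k => f k ≤ g i) (Nat.zero_le z) h0
    have hle : φ i ≤ z := Nat.findGreatest_le z
    have hne : φ i ≠ z := by
      intro h
      rw [h, hwz] at hspec; omega
    have hlt : φ i < z := lt_of_le_of_ne hle hne
    refine ⟨hlt, hspec, ?_⟩
    have := Nat.findGreatest_is_greatest (P := fun k => f k ≤ g i)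
      (Nat.lt_succ_self (φ i)) (by omega)
    simpa using Nat.lt_of_not_le this
  -- each LZ77 phrase contains at most c boundaries
  have key : ∀ k ∈ Finset.range z,
      ((Finset.range a).filter (fun i => φ i = k)).card ≤ c := by
    intro k hk
    rw [Finset.mem_range] at hk
    by_contra hcard
    push_neg at hcard
    set s := (Finset.range a).filter (fun i => φ i = k) with hs
    have hsne : s.Nonempty := Finset.card_pos.mp (by omega)
    set m := s.min' hsne with hm
    have hms : m ∈ s := Finset.min'_mem s hsne
    -- find an element ≥ m + c
    have : ∃ j ∈ s, m + c ≤ j := by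
      by_contra hno
      push_neg at hno
      have : s ⊆ Finset.Ico m (m + c) := by
        intro x hx
        rw [Finset.mem_Ico]
        exact ⟨Finset.min'_le s x hx, hno x hx⟩
      have := Finset.card_le_card this
      simp [Nat.card_Ico] at this
      omega
    obtain ⟨j, hjs, hmcj⟩ := this
    rw [hs, Finset.mem_filter, Finset.mem_range] at hms hjs
    obtain ⟨hma, hmk⟩ := hms
    obtain ⟨hja, hjk⟩ := hjs
    have hfm : f k ≤ g m := by have := (hφ m hma).2.1; rwa [hmk] at this
    have hfj : g j < f (k + 1) := by have := (hφ j hja).2.2; rwa [hjk] at this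
    have hgc : g (m + c) < f (k + 1) :=
      lt_of_le_of_lt (gmono' _ _ hmcj (le_of_lt hja)) hfj
    have hmc : g m < g (m + c) := gmono _ _ (by omega) (by omega)
    have hfz : f (k + 1) ≤ w.length := by
      rw [← hwz]; exact fmono' _ _ (by omega) (le_refl z)
    -- the LZ77 phrase k is a phrase
    rcases hfph k hk with hprev | ⟨hlen1, _⟩
    · -- previous fragment case: build a PrevFrag for g-phrases m..m+c
      obtain ⟨_, hend, i', hi', hocc⟩ := hprev
      apply hopt m (by omega)
      have hca : g (m + c) ≤ g a := gmono' (m + c) a (by omega) (le_refl a)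
      set L := g (m + c) - g m with hL
      set d := g m - f k with hd
      have hLw : g m + L ≤ w.length := by omega
      refine ⟨by omega, by omega, ?_⟩
      refine ⟨i' + d, by omega, ?_, ?_⟩
      · rw [subword_length w (g m) L hLw]
        omega
      · rw [subword_length w (g m) L hLw]
        set n := f (k + 1) - f k with hn
        have husub : subword w i' n = subword w (f k) n := by
          have hlen : (subword w (f k) n).length = n :=
            subword_length w (f k) n (by omega)
          have := hocc.2
          rwa [hlen] at this
        have h1 : subword w (i' + d) L = ((subword w i' n).drop d).take L :=
          subword_subword w i' d L n (by omega)
        have h2 : subword w (f k + d) L = ((subword w (f k) n).drop d).take L :=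
          subword_subword w (f k) d L n (by omega)
        rw [h1, husub, ← h2]
        congr 1
        omega
    · -- fresh letter case: phrase length 1, but two boundaries inside
      have : f (k + 1) = f k + 1 := by
        have := fmono _ _ (Nat.lt_succ_self k) hk
        omega
      have hm1 : g m < g (m + 1) := gmono _ _ (by omega) (by omega)
      have : g (m + 1) ≤ g (m + c) := gmono' _ _ (by omega) (by omega)
      omega
  -- count fiberwise
  calc a = (Finset.range a).card := (Finset.card_range a).symm
    _ ≤ c * (Finset.range z).card := by
        apply Finset.card_le_mul_card_image_of_maps_to
        · intro i hi
          rw [Finset.mem_range] at hi ⊢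
          exact (hφ i hi).1
        · exact key
    _ = c * z := by rw [Finset.card_range]
end

section
/- Let w be a word and let S = {i₁ < i₂ < ... < i_r} be positions such that for each k, the fragment w[i_k..j_k] (for some j_k ≥ i_k with intervals [i_k, j_k] pairwise disjoint) is not a previous fragment of w. Then r ≤ z, the number of phrases of the LZ77 factorization of w. -/
variable {α : Type*}

/-- Shifting inside equal subwords. -/
lemma subword_shift {w : List α} {a b d len L : ℕ}
    (h : subword w a L = subword w b L) (hd : d + len ≤ L) :
    subword w (a + d) len = subword w (b + d) len := by
  have key : ∀ x : ℕ, subword w (x + d) len = ((subword w x L).drop d).take len := by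
    intro x
    unfold subword
    rw [List.drop_take, List.take_take, List.drop_drop]
    congr 1
    omega
  rw [key a, key b, h]

/-- If `w[I k .. J k]`, for `k < r`, are pairwise disjoint fragments of `w` (listed left
to right), none of which is a previous fragment, then `r ≤ z`, the number of phrases
of the LZ77 factorization of `w`. -/
theorem statement_14 (w : List α) (z r : ℕ) (f I J : ℕ → ℕ)
    (hlz : IsLZ77 w z f)
    (hij : ∀ k < r, I k ≤ J k ∧ J k < w.length)
    (hnp : ∀ k < r, ¬ PrevFrag w (I k) (J k + 1 - I k))
    (hdisj : ∀ k, k + 1 < r → J k < I (k + 1)) :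
    r ≤ z := by
  obtain ⟨⟨⟨hb0, hbz, hmono⟩, hphrase⟩, -⟩ := hlz
  -- For each fragment, find a phrase whose endpoint lies inside it.
  have exm : ∀ k < r, ∃ m, m < z ∧ f m ≤ I k ∧ I k < f (m + 1) ∧ f (m + 1) ≤ J k + 1 := by
    intro k hk
    obtain ⟨hIJ, hJw⟩ := hij k hk
    -- find m with f m ≤ I k < f (m+1)
    have exm0 : ∃ m, m < z ∧ f m ≤ I k ∧ I k < f (m + 1) := by
      by_contra h
      push_neg at h
      have hall : ∀ n ≤ z, f n ≤ I k := by
        intro n hn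
        induction n with
        | zero => rw [hb0]; exact Nat.zero_le _
        | succ n ih =>
          have hfn := ih (by omega)
          exact h n (by omega) hfn
      have := hall z le_rfl
      omega
    obtain ⟨m, hmz, hmle, hmlt⟩ := exm0
    refine ⟨m, hmz, hmle, hmlt, ?_⟩
    by_contra hcon
    push_neg at hcon
    -- so J k + 1 < f (m+1); the whole fragment sits strictly inside phrase m
    have hph := hphrase m hmz
    have hfm : f m < f (m + 1) := hmono m hmz
    rcases hph with ⟨hpos, hle, i', hi', hocc⟩ | ⟨hlen1, -⟩
    · -- phrase m is a previous fragment; so is our fragment: contradiction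
      apply hnp k hk
      set L := f (m + 1) - f m with hL
      set d := I k - f m with hd
      set len := J k + 1 - I k with hlenn
      obtain ⟨hocc1, hocc2⟩ := hocc
      have hsubL : (subword w (f m) L).length = L := by
        unfold subword
        rw [List.length_take, List.length_drop]
        omega
      have hlen' : i' + L ≤ w.length := by
        rw [hsubL] at hocc1; exact hocc1
      have hdlen : d + len ≤ L := by omega
      rw [hsubL] at hocc2
      have hshift : subword w (i' + d) len = subword w (f m + d) len :=
        subword_shift hocc2 hdlen
      have hfd : f m + d = I k := by omega
      rw [hfd] at hshift
      refine ⟨by omega, by omega, i' + d, by omega, ?_, ?_⟩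
      · have hsublen : (subword w (I k) len).length = len := by
          unfold subword
          rw [List.length_take, List.length_drop]
          omega
        rw [hsublen]; omega
      · have hsublen : (subword w (I k) len).length = len := by
          unfold subword
          rw [List.length_take, List.length_drop]
          omega
        rw [hsublen]; exact hshift
    · -- fresh letter phrase: length 1, impossible
      omega
  -- choose the phrase index for each k
  choose m hmz hmle hmlt hmJ using exm
  -- J k1 < I k2 whenever k1 < k2 < r
  have chain : ∀ k2, k2 < r → ∀ k1 < k2, J k1 < I k2 := by
    intro k2
    induction k2 with
    | zero => intro _ k1 h; omega
    | succ n ih =>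
      intro hn k1 hk1
      have h1 : J n < I (n + 1) := hdisj n hn
      rcases Nat.lt_succ_iff_lt_or_eq.mp hk1 with h | h
      · have h2 := ih (by omega) k1 h
        have h3 := (hij n (by omega)).1
        omega
      · subst h; exact h1
  -- the map k ↦ m k is injective on Fin r
  have hinj : Function.Injective (fun k : Fin r => (⟨m k k.2, hmz k k.2⟩ : Fin z)) := by
    intro k1 k2 heq
    simp only [Fin.mk.injEq] at heq
    by_contra hne
    have hne' : (k1 : ℕ) ≠ (k2 : ℕ) := fun h => hne (Fin.ext h)
    rcases Nat.lt_or_ge (k1 : ℕ) (k2 : ℕ) with h | h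
    · have hc := chain k2 k2.2 k1 h
      have h1 := hmJ k1 k1.2
      have h2 := hmlt k2 k2.2
      rw [heq] at h1
      omega
    · have h' : (k2 : ℕ) < (k1 : ℕ) := by omega
      have hc := chain k1 k1.2 k2 h'
      have h1 := hmJ k2 k2.2
      have h2 := hmlt k1 k1.2
      rw [heq] at h2
      omega
  calc r = Fintype.card (Fin r) := (Fintype.card_fin r).symm
    _ ≤ Fintype.card (Fin z) := Fintype.card_le_of_injective _ hinj
    _ = z := Fintype.card_fin z
end

section
/- Let w = h_ℓ h_{ℓ+1} ⋯ h_r be a sequence of consecutive fragments whose lengths are strictly increasing powers of two (|h_{i+1}| ≥ 2|h_i| and each |h_i| is a power of 2). Partition them greedily into groups: start a group with h_ℓ; append h_i to the active group g_j iff the fragment of length 2|h_i| starting at the start of g_j is a previous fragment; otherwise close g_j and start a new group with h_i. Then each resulting group is a previous fragment (i.e., a valid phrase), and no concatenation of three consecutive groups g_j g_{j+1} g_{j+2} forms a previous fragment. -/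
variable {α : Type*}

lemma subword_take (w : List α) (i len len' : ℕ) (h : len' ≤ len) :
    (subword w i len).take len' = subword w i len' := by
  simp [subword, List.take_take, Nat.min_eq_left h]

lemma prevFrag_mono (w : List α) {i len len' : ℕ} (h : PrevFrag w i len)
    (h1 : 0 < len') (h2 : len' ≤ len) : PrevFrag w i len' := by
  obtain ⟨-, hle, i', hi', hocc, heq⟩ := h
  rw [subword_length w i len hle] at hocc heq
  refine ⟨h1, by omega, i', hi', ?_, ?_⟩
  · rw [subword_length w i len' (by omega)]; omega
  · rw [subword_length w i len' (by omega)]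
    have := congrArg (List.take len') heq
    rwa [subword_take _ _ _ _ h2, subword_take _ _ _ _ h2] at this

/-- Greedy grouping of a chain of consecutive phrases `h_0, …, h_{r-1}` (with starting
positions `s i` and lengths `L i` that are strictly increasing powers of two) into
groups with index boundaries `G 0 = 0 < G 1 < … < G q = r`: a phrase `h i` is appended
to the active group starting at phrase `G j` iff the fragment of length `2 · L i`
starting at `s (G j)` is a previous fragment, and a new group starts at `h (G (j+1))`
because that test failed. Then every group is a valid phrase, and no three consecutive
groups concatenate to a previous fragment. -/
theorem statement_17 (w : List α) (r q : ℕ) (s L G : ℕ → ℕ)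
    (hcons : ∀ i, i + 1 ≤ r → s (i + 1) = s i + L i)
    (hpow : ∀ i < r, ∃ e, L i = 2 ^ e)
    (hinc : ∀ i, i + 1 < r → L i < L (i + 1))
    (hph : ∀ i < r, IsPhrase w (s i) (L i))
    (hG0 : G 0 = 0) (hGq : G q = r) (hGinc : ∀ j < q, G j < G (j + 1))
    (happ : ∀ j < q, ∀ i, G j < i → i < G (j + 1) → PrevFrag w (s (G j)) (2 * L i))
    (hnew : ∀ j, j + 1 < q → ¬ PrevFrag w (s (G j)) (2 * L (G (j + 1)))) :
    (∀ j < q, IsPhrase w (s (G j)) (s (G (j + 1)) - s (G j))) ∧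
    (∀ j, j + 3 ≤ q → ¬ PrevFrag w (s (G j)) (s (G (j + 3)) - s (G j))) := by
  -- L is positive
  have hLpos : ∀ i < r, 0 < L i := by
    intro i hi; obtain ⟨e, he⟩ := hpow i hi; rw [he]; positivity
  -- doubling
  have hdbl : ∀ i, i + 1 < r → 2 * L i ≤ L (i + 1) := by
    intro i hi
    obtain ⟨e, he⟩ := hpow i (by omega)
    obtain ⟨f, hf⟩ := hpow (i + 1) hi
    have := hinc i hi
    rw [he, hf] at this ⊢
    have hef : e < f := (Nat.pow_lt_pow_iff_right (by norm_num)).mp this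
    calc 2 * 2 ^ e = 2 ^ (e + 1) := by ring
    _ ≤ 2 ^ f := Nat.pow_le_pow_right (by norm_num) (by omega)
  -- telescoping sums
  have hsum : ∀ a b, a ≤ b → b ≤ r → s b = s a + ∑ k ∈ Finset.Ico a b, L k := by
    intro a b hab hbr
    induction b, hab using Nat.le_induction with
    | base => simp
    | succ b hab ih =>
      rw [hcons b hbr, ih (by omega), Finset.sum_Ico_succ_top hab]; omega
  -- G is monotone
  have hGmono : ∀ j j', j ≤ j' → j' ≤ q → G j ≤ G j' := by
    intro j j' hjj hjq
    induction j', hjj using Nat.le_induction with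
    | base => exact le_refl _
    | succ j' hjj ih => exact le_trans (ih (by omega)) (le_of_lt (hGinc j' (by omega)))
  have hGr : ∀ j ≤ q, G j ≤ r := by
    intro j hj; rw [← hGq]; exact hGmono j q hj le_rfl
  -- sum bound by doubling
  have hsum2 : ∀ a b, a ≤ b → b < r → ∑ k ∈ Finset.Ico a (b + 1), L k ≤ 2 * L b := by
    intro a b hab hbr
    induction b, hab using Nat.le_induction with
    | base => simp; omega
    | succ b hab ih =>
      rw [Finset.sum_Ico_succ_top (by omega)]
      have h1 := ih (by omega)
      have h2 := hdbl b hbr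
      omega
  constructor
  · intro j hj
    have hab : G j < G (j + 1) := hGinc j hj
    have hbr : G (j + 1) ≤ r := hGr (j + 1) (by omega)
    have hst := hsum (G j) (G (j + 1)) (le_of_lt hab) hbr
    by_cases hone : G (j + 1) = G j + 1
    · have : s (G (j + 1)) - s (G j) = L (G j) := by rw [hst, hone]; simp
      rw [this]
      exact hph (G j) (by omega)
    · -- group has at least two phrases; last one is i = G (j+1) - 1
      set i := G (j + 1) - 1 with hi
      have hai : G j < i := by omega
      have hib : i < G (j + 1) := by omega
      have hpf := happ j hj i hai hib
      have hsb : ∑ k ∈ Finset.Ico (G j) (G (j + 1)), L k ≤ 2 * L i := by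
        have : G (j + 1) = i + 1 := by omega
        rw [this]
        exact hsum2 (G j) i (by omega) (by omega)
      have hpos : 0 < ∑ k ∈ Finset.Ico (G j) (G (j + 1)), L k := by
        have hmem : G j ∈ Finset.Ico (G j) (G (j + 1)) := by simp [hab]
        exact lt_of_lt_of_le (hLpos (G j) (by omega)) (Finset.single_le_sum (fun k _ => Nat.zero_le _) hmem)
      have hlen : s (G (j + 1)) - s (G j) = ∑ k ∈ Finset.Ico (G j) (G (j + 1)), L k := by omega
      rw [hlen]
      exact Or.inl (prevFrag_mono w hpf hpos hsb)
  · intro j hj H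
    have h1 : G j < G (j + 1) := hGinc j (by omega)
    have h2 : G (j + 1) < G (j + 2) := hGinc (j + 1) (by omega)
    have h3 : G (j + 2) < G (j + 3) := hGinc (j + 2) (by omega)
    have hbr : G (j + 3) ≤ r := hGr (j + 3) hj
    have hst := hsum (G j) (G (j + 3)) (by omega) hbr
    -- 2 * L (G (j+1)) ≤ sum
    have hLle : L (G (j + 1)) ≤ L (G (j + 1) + 1) := le_of_lt (hinc (G (j + 1)) (by omega))
    have hpair : L (G (j + 1)) + L (G (j + 1) + 1) ≤ ∑ k ∈ Finset.Ico (G j) (G (j + 3)), L k := by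
      have hsub : ({G (j + 1), G (j + 1) + 1} : Finset ℕ) ⊆ Finset.Ico (G j) (G (j + 3)) := by
        intro x hx
        simp only [Finset.mem_insert, Finset.mem_singleton] at hx
        rcases hx with h | h <;> simp [Finset.mem_Ico] <;> omega
      calc L (G (j + 1)) + L (G (j + 1) + 1)
          = ∑ k ∈ ({G (j + 1), G (j + 1) + 1} : Finset ℕ), L k := by
            rw [Finset.sum_pair (by omega)]
        _ ≤ _ := Finset.sum_le_sum_of_subset hsub
    have hle : 2 * L (G (j + 1)) ≤ s (G (j + 3)) - s (G j) := by omega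
    have hpos : 0 < 2 * L (G (j + 1)) := by
      have := hLpos (G (j + 1)) (by omega); omega
    exact hnew j (by omega) (prevFrag_mono w H hpos hle)
end
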